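/- Bellman recursion: with G(1,j) := 0 for all j > 1 and G(i,j) := min over segmentations in Segment(i,j) of V, one has for all integers 1 < s < t: G(s,t) = min_{1 ≤ r < s} ( G(r,s) + c(r,s,t) + β ). -/

import Mathlib

def SegSet (T : ℕ) : Set (List ℕ) :=
  {l | l.Chain' (· < ·) ∧ l.head? = some 1 ∧ l.getLast? = some T}

def SegEnd (i j : ℕ) : Set (List ℕ) :=
  {l | l ∈ SegSet j ∧ ∃ l₀ : List ℕ, l = l₀ ++ [i, j]}

noncomputable def tripleCosts (c : ℕ → ℕ → ℕ → ℝ) : List ℕ → ℝ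
  | a :: b :: d :: rest => c a b d + tripleCosts c (b :: d :: rest)
  | _ => 0

noncomputable def V (c : ℕ → ℕ → ℕ → ℝ) (β : ℝ) (l : List ℕ) : ℝ :=
  tripleCosts c l + β * ((l.length - 2 : ℕ) : ℝ)

lemma tripleCosts_concat (c : ℕ → ℕ → ℕ → ℝ) :
    ∀ (l : List ℕ) (a b d : ℕ),
      tripleCosts c (l ++ [a, b, d]) = tripleCosts c (l ++ [a, b]) + c a b d := by
  intro l
  induction l with
  | nil => intro a b d; simp [tripleCosts]
  | cons x l ih =>
      intro a b d
      cases l with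
      | nil => simp [tripleCosts]
      | cons y l' =>
          cases l' with
          | nil => simp [tripleCosts]; ring
          | cons z l'' =>
              simp only [List.cons_append, tripleCosts, List.append_eq]
              have := ih a b d
              simp only [List.cons_append] at this
              rw [this]; ring

lemma V_concat (c : ℕ → ℕ → ℕ → ℝ) (β : ℝ) (l₀ : List ℕ) (a b d : ℕ) :
    V c β (l₀ ++ [a, b, d]) = V c β (l₀ ++ [a, b]) + c a b d + β := by
  unfold V
  rw [tripleCosts_concat]
  have h1 : (l₀ ++ [a, b, d]).length - 2 = l₀.length + 1 := by simp
  have h2 : (l₀ ++ [a, b]).length - 2 = l₀.length := by simp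
  rw [h1, h2]
  push_cast
  ring

/-- Bellman recursion: with `G 1 j = 0` and `G i j` the minimum of `V` over
`Segment(i,j)` for `1 < i < j`, one has
`G s t = min_{1 ≤ r < s} (G r s + c r s t + β)`. -/
theorem stmt3 (c : ℕ → ℕ → ℕ → ℝ) (β : ℝ) (G : ℕ → ℕ → ℝ)
    (hG1 : ∀ j, 1 < j → G 1 j = 0)
    (hG : ∀ i j, 1 < i → i < j → IsLeast (V c β '' SegEnd i j) (G i j))
    (s t : ℕ) (hs : 1 < s) (hst : s < t) :
    G s t = (Finset.Ico 1 s).inf' (Finset.nonempty_Ico.mpr hs)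
      (fun r => G r s + c r s t + β) := by
  apply le_antisymm
  · apply Finset.le_inf'
    intro r hr
    rw [Finset.mem_Ico] at hr
    obtain ⟨h1r, hrs⟩ := hr
    show G s t ≤ G r s + c r s t + β
    rcases eq_or_lt_of_le h1r with h1 | h1
    · subst h1
      rw [hG1 s hs]
      have hmem : [1, s, t] ∈ SegEnd s t := by
        refine ⟨⟨?_, rfl, rfl⟩, [1], rfl⟩
        exact List.isChain_cons_cons.mpr ⟨hs, List.isChain_cons_cons.mpr ⟨hst, List.isChain_singleton t⟩⟩
      have hle := (hG s t hs hst).2 ⟨[1, s, t], hmem, rfl⟩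
      have hV : V c β [1, s, t] = c 1 s t + β := by simp [V, tripleCosts]
      linarith
    · obtain ⟨l, hl, hVl⟩ := (hG r s h1 hrs).1
      obtain ⟨⟨hchain, hhead, hlast⟩, l₀, rfl⟩ := hl
      have hmem : (l₀ ++ [r, s]) ++ [t] ∈ SegEnd s t := by
        refine ⟨⟨?_, ?_, ?_⟩, l₀ ++ [r], by simp⟩
        · refine List.isChain_append.mpr ?_
          refine ⟨hchain, List.isChain_singleton t, ?_⟩
          intro x hx y hy
          rw [hlast] at hx
          simp only [Option.mem_def, Option.some.injEq, List.head?_cons] at hx hy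
          subst hx; subst hy; exact hst
        · rw [List.head?_append, hhead]; rfl
        · rw [List.getLast?_append]; rfl
      have hle := (hG s t hs hst).2 ⟨_, hmem, rfl⟩
      have hV : V c β ((l₀ ++ [r, s]) ++ [t]) = V c β (l₀ ++ [r, s]) + c r s t + β := by
        rw [List.append_assoc]
        exact V_concat c β l₀ r s t
      rw [hV, hVl] at hle
      linarith
  · obtain ⟨l, hl, hVl⟩ := (hG s t hs hst).1
    obtain ⟨⟨hchain, hhead, hlast⟩, l₀, rfl⟩ := hl
    rcases l₀.eq_nil_or_concat with rfl | ⟨l₁, r, rfl⟩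
    · simp at hhead; omega
    · have hl_eq : l₁.concat r ++ [s, t] = l₁ ++ [r, s, t] := by simp
      rw [hl_eq] at hchain hhead hVl
      have hrs : r < s := by
        have hc2 := (List.isChain_append.mp hchain).2.1
        exact (List.isChain_cons_cons.mp hc2).1
      rcases l₁ with _ | ⟨x, l₁⟩
      · simp only [List.nil_append, List.head?_cons, Option.some.injEq] at hhead
        subst hhead
        have h1mem : (1 : ℕ) ∈ Finset.Ico 1 s := by
          rw [Finset.mem_Ico]; exact ⟨le_refl 1, hs⟩
        refine le_trans (Finset.inf'_le _ h1mem) ?_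
        show G 1 s + c 1 s t + β ≤ G s t
        rw [hG1 s hs]
        have hV : V c β ([] ++ [1, s, t]) = c 1 s t + β := by simp [V, tripleCosts]
        rw [hV] at hVl
        linarith
      · have hx : x = 1 := by
          simp only [List.cons_append, List.head?_cons, Option.some.injEq] at hhead
          exact hhead
        subst hx
        have hpair := List.isChain_iff_pairwise.mp hchain
        have h1r : 1 < r := by
          rw [List.cons_append, List.pairwise_cons] at hpair
          exact hpair.1 r (by simp)
        have hrmem : r ∈ Finset.Ico 1 s := by
          rw [Finset.mem_Ico]; exact ⟨le_of_lt h1r, hrs⟩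
        refine le_trans (Finset.inf'_le _ hrmem) ?_
        show G r s + c r s t + β ≤ G s t
        have hmem2 : (1 :: l₁) ++ [r, s] ∈ SegEnd r s := by
          refine ⟨⟨?_, rfl, ?_⟩, 1 :: l₁, rfl⟩
          · obtain ⟨hA, hB, hAB⟩ := List.isChain_append.mp hchain
            refine List.isChain_append.mpr ?_
            refine ⟨hA, List.isChain_cons_cons.mpr ⟨hrs, List.isChain_singleton s⟩, ?_⟩
            intro a ha b hb
            simp only [Option.mem_def, List.head?_cons, Option.some.injEq] at hb
            subst hb
            exact hAB a ha r rfl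
          · rw [List.getLast?_append]; rfl
        have hle := (hG r s h1r hrs).2 ⟨_, hmem2, rfl⟩
        have hV : V c β ((1 :: l₁) ++ [r, s, t]) = V c β ((1 :: l₁) ++ [r, s]) + c r s t + β :=
          V_concat c β (1 :: l₁) r s t
        rw [hV] at hVl
        linarith
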